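/- Let z ∈ Ω with θ(z) < 0, let s(z) ∈ Ω be a minimizer of s ↦ φ_C(JV(z)(s − z)) over Ω, and set d(z) = s(z) − z. Then for every β ∈ (0,1) there exists t̂ ∈ (0,1] such that for all t ∈ (0, t̂], V(z) + β·t·JV(z)(d(z)) − V(z + t·d(z)) ∈ int C. -/

import Mathlib

open Metric Set

/-- The oriented distance function associated with the cone `C`:
`φ_C(y) = d(y, -C) - d(y, ℝ^m \\ (-C))`. -/
noncomputable def phiC {m : ℕ} (C : Set (EuclideanSpace ℝ (Fin m)))
    (y : EuclideanSpace ℝ (Fin m)) : ℝ :=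
  Metric.infDist y (-C) - Metric.infDist y ((-C)ᶜ)

/-- The optimal value `θ(z) = min_{s ∈ Ω} φ_C (JV(z)(s - z))`. -/
noncomputable def theta {m n : ℕ} (C : Set (EuclideanSpace ℝ (Fin m)))
    (Ω : Set (EuclideanSpace ℝ (Fin n)))
    (V : EuclideanSpace ℝ (Fin n) → EuclideanSpace ℝ (Fin m))
    (z : EuclideanSpace ℝ (Fin n)) : ℝ :=
  sInf ((fun s => phiC C (fderiv ℝ V z (s - z))) '' Ω)

theorem armijo_stepsize_exists {m n : ℕ}
    (C : Set (EuclideanSpace ℝ (Fin m)))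
    (hclosed : IsClosed C) (hconv : Convex ℝ C)
    (hcone : ∀ a ∈ C, ∀ l : ℝ, 0 ≤ l → l • a ∈ C)
    (hpointed : C ∩ (-C) = {0})
    (hint : (interior C).Nonempty)
    (Ω : Set (EuclideanSpace ℝ (Fin n)))
    (hΩne : Ω.Nonempty) (hΩcpt : IsCompact Ω) (hΩconv : Convex ℝ Ω)
    (V : EuclideanSpace ℝ (Fin n) → EuclideanSpace ℝ (Fin m))
    (hV : ContDiff ℝ 1 V)
    (z : EuclideanSpace ℝ (Fin n)) (hz : z ∈ Ω)
    (hθ : theta C Ω V z < 0)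
    (sz : EuclideanSpace ℝ (Fin n)) (hsz : sz ∈ Ω)
    (hszmin : ∀ s ∈ Ω,
      phiC C (fderiv ℝ V z (sz - z)) ≤ phiC C (fderiv ℝ V z (s - z)))
    (β : ℝ) (hβ : β ∈ Set.Ioo (0:ℝ) 1) :
    ∃ that ∈ Set.Ioc (0:ℝ) 1, ∀ t ∈ Set.Ioc (0:ℝ) that,
      V z + (β * t) • (fderiv ℝ V z (sz - z)) - V (z + t • (sz - z)) ∈ interior C := by
  obtain ⟨hβ0, hβ1⟩ := hβ
  set d : EuclideanSpace ℝ (Fin n) := sz - z with hd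
  set w : EuclideanSpace ℝ (Fin m) := fderiv ℝ V z d with hw
  -- φ_C(w) < 0
  have hφw : phiC C w < 0 := by
    have h1 : phiC C w ≤ theta C Ω V z := by
      apply le_csInf (hΩne.image _)
      rintro x ⟨s, hs, rfl⟩
      exact hszmin s hs
    linarith
  set r := infDist w ((-C)ᶜ) with hr
  have hr0 : 0 < r := by
    have h2 : (0:ℝ) ≤ infDist w (-C) := infDist_nonneg
    unfold phiC at hφw
    simp only [← hr] at hφw
    linarith
  have hball : Metric.ball (-w) r ⊆ C := by
    intro u hu
    by_contra hnc
    have hmem : -u ∈ (-C)ᶜ := by simpa [Set.mem_neg] using hnc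
    have h2 : infDist w ((-C)ᶜ) ≤ dist w (-u) := infDist_le_dist_of_mem hmem
    rw [mem_ball, dist_eq_norm] at hu
    rw [dist_eq_norm] at h2
    have heq : ‖w - -u‖ = ‖u - -w‖ := by congr 1; abel
    rw [heq] at h2
    rw [hr] at hu
    linarith
  -- scaled balls
  have hballc : ∀ c : ℝ, 0 < c → ∀ y, ‖y - c • (-w)‖ < c * r → y ∈ interior C := by
    intro c hc y hy
    have hsub : Metric.ball y (c * r - ‖y - c • (-w)‖) ⊆ C := by
      intro v hv
      rw [mem_ball, dist_eq_norm] at hv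
      have hv2 : ‖v - c • (-w)‖ < c * r := by
        have h3 : v - c • (-w) = (v - y) + (y - c • (-w)) := by abel
        calc ‖v - c • (-w)‖ ≤ ‖v - y‖ + ‖y - c • (-w)‖ := by
              rw [h3]; exact norm_add_le _ _
          _ < c * r := by linarith
      have hmem : c⁻¹ • v ∈ Metric.ball (-w) r := by
        rw [mem_ball, dist_eq_norm]
        have h4 : c⁻¹ • v - -w = c⁻¹ • (v - c • (-w)) := by
          rw [smul_sub, smul_smul, inv_mul_cancel₀ hc.ne', one_smul]
        rw [h4, norm_smul]
        simp only [norm_inv, Real.norm_eq_abs, abs_of_pos hc]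
        rw [inv_mul_lt_iff₀ hc]
        exact hv2
      have h5 := hcone _ (hball hmem) c hc.le
      rwa [smul_smul, mul_inv_cancel₀ hc.ne', one_smul] at h5
    apply interior_maximal hsub isOpen_ball
    rw [mem_ball, dist_self]
    linarith
  -- derivative of t ↦ V (z + t • d) at 0
  have hVd : HasFDerivAt V (fderiv ℝ V z) z :=
    (hV.differentiable one_ne_zero z).hasFDerivAt
  have hline : HasDerivAt (fun t : ℝ => z + t • d) d 0 := by
    simpa using ((hasDerivAt_id (0:ℝ)).smul_const d).const_add z
  have hVd' : HasFDerivAt V (fderiv ℝ V z) ((fun t : ℝ => z + t • d) 0) := by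
    simpa using hVd
  have hg : HasDerivAt (fun t : ℝ => V (z + t • d)) w 0 :=
    hVd'.comp_hasDerivAt 0 hline
  have hlo := (hasDerivAt_iff_isLittleO.mp hg)
  have hε : (0:ℝ) < (1 - β) * r / 2 := by nlinarith
  have hev := hlo.def hε
  rw [Metric.eventually_nhds_iff] at hev
  obtain ⟨δ, hδ0, hδ⟩ := hev
  refine ⟨min 1 (δ/2), ⟨lt_min one_pos (by linarith), min_le_left _ _⟩, ?_⟩
  intro t ⟨ht0, ht1⟩
  have htδ : dist t 0 < δ := by
    rw [Real.dist_eq, sub_zero, abs_of_pos ht0]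
    have := le_trans ht1 (min_le_right 1 (δ/2))
    linarith
  have hkey := hδ htδ
  simp only [sub_zero, Real.norm_eq_abs, abs_of_pos ht0] at hkey
  simp only [zero_smul, add_zero] at hkey
  apply hballc ((1 - β) * t) (by nlinarith)
  have heq : V z + (β * t) • w - V (z + t • d) - ((1 - β) * t) • (-w)
      = -(V (z + t • d) - V z - t • w) := by
    module
  rw [heq, norm_neg]
  calc ‖V (z + t • d) - V z - t • w‖ ≤ (1 - β) * r / 2 * t := hkey
    _ < (1 - β) * t * r := by nlinarith
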